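/- Let M22, N22 be symmetric ℓ×ℓ real matrices with N22 ≤ 0 and ker N22 ⊆ ker M22, and let R be any symmetric positive semidefinite ℓ×ℓ matrix with ker N22 ⊆ ker R. Then there exists α ∈ ℝ such that M22 − α N22 − R ≥ 0. -/

import Mathlib

open Matrix Finset

lemma aux_psd {l : ℕ} (S A : Matrix (Fin l) (Fin l) ℝ)
    (hS : S.PosSemidef) (hAh : Aᵀ = A)
    (hker : ∀ x, S *ᵥ x = 0 → A *ᵥ x = 0) :
    ∃ α : ℝ, (A + α • S).PosSemidef := by
  classical
  have hH : S.IsHermitian := hS.1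
  have hA : A.IsHermitian := by simpa [IsHermitian] using hAh
  set U : Matrix (Fin l) (Fin l) ℝ := (hH.eigenvectorUnitary : Matrix (Fin l) (Fin l) ℝ) with hU
  have hstar : star U = Uᵀ := by ext i j; simp [Matrix.star_apply]
  have hUU' : U * Uᵀ = 1 := by
    rw [← hstar]; exact mem_unitaryGroup_iff.mp (hH.eigenvectorUnitary).2
  set ev : Fin l → ℝ := hH.eigenvalues with hev
  have hev0 : ∀ i, 0 ≤ ev i := fun i => hS.eigenvalues_nonneg i
  have hspec : S = U * diagonal ev * Uᵀ := by
    rw [← hstar]; simpa using hH.spectral_theorem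
  set A' : Matrix (Fin l) (Fin l) ℝ := Uᵀ * A * U with hA'def
  have hA'h : A'ᵀ = A' := by
    rw [hA'def, transpose_mul, transpose_mul, transpose_transpose, hAh, Matrix.mul_assoc]
  have hAeq : A = U * A' * Uᵀ := by
    rw [hA'def]
    calc A = (U * Uᵀ) * A * (U * Uᵀ) := by rw [hUU']; simp
    _ = U * (Uᵀ * A * U) * Uᵀ := by noncomm_ring
  have hcol : ∀ i j, ev i = 0 ∨ ev j = 0 → A' i j = 0 := by
    have base : ∀ i j, ev i = 0 → A' j i = 0 := by
      intro i j h0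
      have hv : S *ᵥ (U *ᵥ Pi.single i 1) = 0 := by
        have h1 : U *ᵥ Pi.single i 1 = ⇑(hH.eigenvectorBasis i) := by
          rw [hU]; exact hH.eigenvectorUnitary_mulVec i
        have h2 : S *ᵥ ⇑(hH.eigenvectorBasis i) = ev i • ⇑(hH.eigenvectorBasis i) := by
          simpa using hH.mulVec_eigenvectorBasis i
        rw [h1, h2, h0, zero_smul]
      have hAv : A *ᵥ (U *ᵥ Pi.single i 1) = 0 := hker _ hv
      have hz : A' *ᵥ Pi.single i 1 = 0 := by
        rw [hA'def, ← mulVec_mulVec, ← mulVec_mulVec, hAv, mulVec_zero]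
      calc A' j i = (A' *ᵥ Pi.single i 1) j := by simp [mulVec_single]
      _ = 0 := by rw [hz]; rfl
    intro i j h
    rcases h with h | h
    · have h2 : A' i j = A'ᵀ j i := rfl
      rw [h2, hA'h]; exact base i j h
    · exact base j i h
  set C : ℝ := ∑ i, ∑ j, |A' i j| with hC
  have hC0 : 0 ≤ C := sum_nonneg fun i _ => sum_nonneg fun j _ => abs_nonneg _
  set g : Fin l → ℝ := fun i => if ev i = 0 then 0 else (ev i)⁻¹ with hg
  have hg0 : ∀ i, 0 ≤ g i := by
    intro i; rw [hg]; dsimp only; split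
    · exact le_refl 0
    · exact inv_nonneg.mpr (hev0 i)
  refine ⟨C * ∑ i, g i, posSemidef_iff_dotProduct_mulVec.mpr ⟨?_, ?_⟩⟩
  · have h2 : Sᵀ = S := by simpa [IsHermitian] using hH.eq
    simp [IsHermitian, conjTranspose_add, conjTranspose_smul, hAh, h2]
  intro x
  set y : Fin l → ℝ := Uᵀ *ᵥ x with hy
  have key : ∀ B : Matrix (Fin l) (Fin l) ℝ,
      x ⬝ᵥ ((U * B * Uᵀ) *ᵥ x) = y ⬝ᵥ (B *ᵥ y) := by
    intro B
    rw [hy, ← mulVec_mulVec, ← mulVec_mulVec, dotProduct_mulVec, mulVec_transpose]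
  have hqS : x ⬝ᵥ (S *ᵥ x) = ∑ i, ev i * y i ^ 2 := by
    rw [hspec, key]
    simp only [dotProduct, mulVec_diagonal]
    exact sum_congr rfl fun i _ => by ring
  have hqA : x ⬝ᵥ (A *ᵥ x) = ∑ i, ∑ j, y i * (A' i j * y j) := by
    conv_lhs => rw [hAeq]
    rw [key]
    simp only [dotProduct, mulVec, Finset.mul_sum]
  set T : ℝ := ∑ i, if ev i = 0 then (0:ℝ) else y i ^ 2 with hT
  have hT0 : 0 ≤ T := sum_nonneg fun i _ => by split <;> positivity
  have hyT : ∀ i, ev i ≠ 0 → y i ^ 2 ≤ T := by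
    intro i hi
    calc y i ^ 2 = if ev i = 0 then (0:ℝ) else y i ^ 2 := by rw [if_neg hi]
    _ ≤ T := single_le_sum (f := fun j => if ev j = 0 then (0:ℝ) else y j ^ 2)
        (fun j _ => by split <;> positivity) (mem_univ i)
  have ineq1 : ∀ i j, -(|A' i j| * T) ≤ y i * (A' i j * y j) := by
    intro i j
    by_cases hi : ev i = 0
    · rw [hcol i j (Or.inl hi)]; simp
    by_cases hj : ev j = 0
    · rw [hcol i j (Or.inr hj)]; simp
    have h1 : |y i| * |y j| ≤ T := by
      nlinarith [hyT i hi, hyT j hj, sq_nonneg (|y i| - |y j|), sq_abs (y i), sq_abs (y j)]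
    have h2 : |y i * (A' i j * y j)| ≤ |A' i j| * T := by
      rw [abs_mul, abs_mul]
      calc |y i| * (|A' i j| * |y j|) = |A' i j| * (|y i| * |y j|) := by ring
      _ ≤ |A' i j| * T := mul_le_mul_of_nonneg_left h1 (abs_nonneg _)
    linarith [neg_abs_le (y i * (A' i j * y j))]
  have sum1 : -(C * T) ≤ ∑ i, ∑ j, y i * (A' i j * y j) := by
    have hCT : C * T = ∑ i, ∑ j, |A' i j| * T := by
      rw [hC, sum_mul]; exact sum_congr rfl fun i _ => by rw [sum_mul]
    calc -(C * T) = ∑ i, ∑ j, -(|A' i j| * T) := by rw [hCT]; simp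
    _ ≤ ∑ i, ∑ j, y i * (A' i j * y j) :=
      sum_le_sum fun i _ => sum_le_sum fun j _ => ineq1 i j
  have ineq2 : C * T ≤ (C * ∑ i, g i) * ∑ i, ev i * y i ^ 2 := by
    have hTeq : T = ∑ i, g i * (ev i * y i ^ 2) := by
      refine sum_congr rfl fun i _ => ?_
      by_cases hi : ev i = 0
      · simp [hg, hi]
      · rw [if_neg hi, hg]; dsimp only; rw [if_neg hi, ← mul_assoc, inv_mul_cancel₀ hi, one_mul]
    have hstep : ∑ i, g i * (ev i * y i ^ 2) ≤ (∑ i, g i) * ∑ i, ev i * y i ^ 2 := by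
      rw [Finset.mul_sum]
      exact sum_le_sum fun i _ => mul_le_mul_of_nonneg_right
        (single_le_sum (fun j _ => hg0 j) (mem_univ i))
        (mul_nonneg (hev0 i) (sq_nonneg _))
    calc C * T = C * ∑ i, g i * (ev i * y i ^ 2) := by rw [hTeq]
    _ ≤ C * ((∑ i, g i) * ∑ i, ev i * y i ^ 2) := mul_le_mul_of_nonneg_left hstep hC0
    _ = (C * ∑ i, g i) * ∑ i, ev i * y i ^ 2 := by ring
  have hst : star x = x := by simp
  rw [hst, add_mulVec, smul_mulVec, dotProduct_add, dotProduct_smul, smul_eq_mul, hqA, hqS]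
  linarith

/-- Final step of the matrix Finsler's lemma proof: with `N22 ≤ 0`,
`ker N22 ⊆ ker M22` and `R ≥ 0` with `ker N22 ⊆ ker R`, a sufficiently large
`α` makes `M22 − αN22 − R` positive semidefinite. -/
theorem exists_alpha_psd {l : ℕ}
    (M22 N22 R : Matrix (Fin l) (Fin l) ℝ)
    (hM22 : M22ᵀ = M22) (hN22 : N22ᵀ = N22)
    (hN22neg : (-N22).PosSemidef)
    (hkerM : ∀ x : Fin l → ℝ, N22 *ᵥ x = 0 → M22 *ᵥ x = 0)
    (hR : R.PosSemidef)
    (hkerR : ∀ x : Fin l → ℝ, N22 *ᵥ x = 0 → R *ᵥ x = 0) :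
    ∃ α : ℝ, (M22 - α • N22 - R).PosSemidef := by
  have hRt : Rᵀ = R := by simpa [Matrix.IsHermitian] using hR.1
  obtain ⟨α, hα⟩ := aux_psd (-N22) (M22 - R) hN22neg
    (by rw [transpose_sub, hM22, hRt])
    (fun x hx => by
      have h0 : N22 *ᵥ x = 0 := by
        have := hx
        rwa [neg_mulVec, neg_eq_zero] at this
      rw [sub_mulVec, hkerM x h0, hkerR x h0, sub_zero])
  refine ⟨α, ?_⟩
  have : M22 - α • N22 - R = M22 - R + α • (-N22) := by
    rw [smul_neg]; abel
  rw [this]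
  exact hα
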